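/- Let (α_n : n ≥ 0) be a sequence of bounded operators on 𝓗 and let λ ∈ ℝ be such that the limit C(λ) = lim_{n→∞} (1/‖α_n a_n^*‖)·sym([[α_n a_n^*, −(λ·Id − b_n) a_{n-1}^{-1} α_{n-1} a_n], [0, a_n^* a_{n-1}^{-1} α_{n-1} a_n]]) exists in the operator norm and is a strictly positive operator on 𝓗 ⊕ 𝓗, and assume ∑_{n≥0} 1/‖α_n a_n^*‖ = ∞. If for a nonzero α ∈ 𝓗 ⊕ 𝓗 one has liminf_{n→∞} S_n(α, λ) > 0, then the generalised eigenvector u associated with λ with (u_0, u_1)ᵗ = α does not belong to ℓ²(ℕ;𝓗). -/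

import Mathlib

open ContinuousLinearMap Filter
open scoped ENNReal NNReal
noncomputable section

variable {H : Type*} [NormedAddCommGroup H] [InnerProductSpace ℂ H] [CompleteSpace H]

/-- The Hilbert space direct sum `𝓗 ⊕ 𝓗`. -/
abbrev H2 (H : Type*) [NormedAddCommGroup H] [InnerProductSpace ℂ H] : Type _ :=
  WithLp 2 (H × H)

/-- The column vector `(x, y)ᵗ` as an element of `𝓗 ⊕ 𝓗`. -/
def pr (x y : H) : H2 H := (WithLp.equiv 2 (H × H)).symm (x, y)

/-- The block operator `[[A, B], [C, D]]` on `𝓗 ⊕ 𝓗`. -/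
def blk (A B C D : H →L[ℂ] H) : H2 H →L[ℂ] H2 H :=
  ((WithLp.prodContinuousLinearEquiv 2 ℂ H H).symm : (H × H) →L[ℂ] H2 H) ∘L
    ((A ∘L ContinuousLinearMap.fst ℂ H H + B ∘L ContinuousLinearMap.snd ℂ H H).prod
      (C ∘L ContinuousLinearMap.fst ℂ H H + D ∘L ContinuousLinearMap.snd ℂ H H)) ∘L
    ((WithLp.prodContinuousLinearEquiv 2 ℂ H H) : H2 H →L[ℂ] (H × H))

/-- The real part `sym X = (X + X^*)/2` of a bounded operator. -/
def sym {E : Type*} [NormedAddCommGroup E] [InnerProductSpace ℂ E] [CompleteSpace E]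
    (X : E →L[ℂ] E) : E →L[ℂ] E :=
  (2 : ℂ)⁻¹ • (X + ContinuousLinearMap.adjoint X)

/-- `X` is strictly positive: `⟨Xv, v⟩ ≥ c‖v‖²` for some `c > 0`. -/
def StrictlyPos {E : Type*} [NormedAddCommGroup E] [InnerProductSpace ℂ E] [CompleteSpace E]
    (X : E →L[ℂ] E) : Prop :=
  ∃ c > (0 : ℝ), ∀ v : E, c * ‖v‖ ^ 2 ≤ (inner ℂ (X v) v : ℂ).re

/-- `X'` is a two-sided bounded inverse of `X`. -/
def Inverts (X X' : H →L[ℂ] H) : Prop := X' ∘L X = 1 ∧ X ∘L X' = 1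

/-- The formal Jacobi matrix `𝒜`: `(𝒜u)₀ = b₀u₀ + a₀u₁`,
`(𝒜u)ₙ = aₙ₋₁^* uₙ₋₁ + bₙ uₙ + aₙ uₙ₊₁` for `n ≥ 1`. -/
def jacobiA (a b : ℕ → H →L[ℂ] H) (u : ℕ → H) : ℕ → H
  | 0 => b 0 (u 0) + a 0 (u 1)
  | n + 1 => adjoint (a n) (u n) + b (n + 1) (u (n + 1)) + a (n + 1) (u (n + 2))

/-- The generalised eigenvector recurrence
`aₙ₋₁^* uₙ₋₁ + bₙ uₙ + aₙ uₙ₊₁ = z uₙ` for all `n ≥ 1`. -/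
def GenEigRec (a b : ℕ → H →L[ℂ] H) (z : ℂ) (u : ℕ → H) : Prop :=
  ∀ n : ℕ, adjoint (a n) (u n) + b (n + 1) (u (n + 1)) + a (n + 1) (u (n + 2)) = z • u (n + 1)

/-- `u` is a generalised eigenvector associated with `z`. -/
def IsGenEig (a b : ℕ → H →L[ℂ] H) (z : ℂ) (u : ℕ → H) : Prop :=
  u ≠ 0 ∧ GenEigRec a b z u

/-- `u` belongs to `ℓ²(ℕ; 𝓗)`. -/
def MemL2 (u : ℕ → H) : Prop := Summable fun n => ‖u n‖ ^ 2

/-- The transfer matrix `Bₙ(z)`; here `a'` is the sequence of inverses `aₙ⁻¹`. -/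
def transfer (a a' b : ℕ → H →L[ℂ] H) (z : ℂ) (n : ℕ) : H2 H →L[ℂ] H2 H :=
  blk 0 1 (-(a' n ∘L adjoint (a (n - 1)))) (a' n ∘L (z • (1 : H →L[ℂ] H) - b n))

/-- `prodD B n k = B (n+k-1) ∘ ⋯ ∘ B n`. -/
def prodD (B : ℕ → (H2 H →L[ℂ] H2 H)) : ℕ → ℕ → (H2 H →L[ℂ] H2 H)
  | _, 0 => 1
  | n, k + 1 => B (n + k) ∘L prodD B n k

/-- `sym (diag(a_{n+N-1}, a_{n+N-1}^*) · E · Xₙ(z))` where `Xₙ(z) = B_{n+N-1}(z)⋯Bₙ(z)`. -/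
def turanOp (a a' b : ℕ → H →L[ℂ] H) (N : ℕ) (z : ℂ) (n : ℕ) : H2 H →L[ℂ] H2 H :=
  sym (blk (a (n + N - 1)) 0 0 (adjoint (a (n + N - 1))) ∘L blk 0 (-1) 1 0 ∘L
    prodD (transfer a a' b z) n N)

/-- The `N`-shifted Turán determinant `Sₙ(α, z)` of a generalised eigenvector `u`. -/
def turanS (a a' b : ℕ → H →L[ℂ] H) (N : ℕ) (z : ℂ) (u : ℕ → H) (n : ℕ) : ℝ :=
  (inner ℂ (turanOp a a' b N z n (pr (u (n - 1)) (u n))) (pr (u (n - 1)) (u n)) : ℂ).re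

/-- The family `{Q^z : z ∈ K}` is uniformly non-degenerated on `K`, where
`Qₙ^z(v) = ‖a_{n+N-1}‖⁻¹ ⟨sym(diag(a_{n+N-1}, a_{n+N-1}^*)·E·Xₙ(z)) v, v⟩`. -/
def UnifNonDeg (a a' b : ℕ → H →L[ℂ] H) (N : ℕ) (K : Set ℂ) : Prop :=
  ∃ c ≥ (1 : ℝ), ∃ M : ℕ, 1 ≤ M ∧ ∀ v : H2 H, ∀ z ∈ K, ∀ n : ℕ, M ≤ n →
    c⁻¹ * ‖v‖ ^ 2 ≤ |‖a (n + N - 1)‖⁻¹ * (inner ℂ (turanOp a a' b N z n v) v : ℂ).re| ∧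
    |‖a (n + N - 1)‖⁻¹ * (inner ℂ (turanOp a a' b N z n v) v : ℂ).re| ≤ c * ‖v‖ ^ 2

/-- The matrix `𝓑ᵢ(z) = [[0, Id], [−Rᵢ, z Tᵢ − Qᵢ]]`. -/
def calB (T Q R : ℕ → H →L[ℂ] H) (z : ℂ) (i : ℕ) : H2 H →L[ℂ] H2 H :=
  blk 0 1 (-(R i)) (z • T i - Q i)

/-- `ℱ(λ) = sym([[0, −C_{N-1}], [C_{N-1}^*, 0]] · 𝓑_{N-1}(λ)⋯𝓑₀(λ))` from Theorem B. -/
def calF (T Q R C : ℕ → H →L[ℂ] H) (N : ℕ) (lam : ℝ) : H2 H →L[ℂ] H2 H :=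
  sym (blk 0 (-(C (N - 1))) (adjoint (C (N - 1))) 0 ∘L prodD (calB T Q R (lam : ℂ)) 0 N)

/-- The quadratic-form operator of the commutator approach (`al` is the sequence `α`):
`sym [[α_{n-1} a_{n-1}^*, −α_{n-1}(λ − bₙ)], [0, αₙ aₙ^*]]`. -/
def commOp (a b al : ℕ → H →L[ℂ] H) (lam : ℝ) (n : ℕ) : H2 H →L[ℂ] H2 H :=
  sym (blk (al (n - 1) ∘L adjoint (a (n - 1)))
    (-(al (n - 1) ∘L ((lam : ℂ) • (1 : H →L[ℂ] H) - b n))) 0 (al n ∘L adjoint (a n)))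

/-- `Sₙ(α, λ)` of the commutator approach. -/
def commS (a b al : ℕ → H →L[ℂ] H) (lam : ℝ) (u : ℕ → H) (n : ℕ) : ℝ :=
  (inner ℂ (commOp a b al lam n (pr (u (n - 1)) (u n))) (pr (u (n - 1)) (u n)) : ℂ).re

/-- `sym [[αₙ aₙ^*, −(λ − bₙ) aₙ₋₁⁻¹ αₙ₋₁ aₙ], [0, aₙ^* aₙ₋₁⁻¹ αₙ₋₁ aₙ]]`;
its normalisation converges to `C(λ)`. -/
def climOp (a a' b al : ℕ → H →L[ℂ] H) (lam : ℝ) (n : ℕ) : H2 H →L[ℂ] H2 H :=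
  sym (blk (al n ∘L adjoint (a n))
    (-((((lam : ℂ) • (1 : H →L[ℂ] H) - b n)) ∘L a' (n - 1) ∘L al (n - 1) ∘L a n))
    0
    (adjoint (a n) ∘L a' (n - 1) ∘L al (n - 1) ∘L a n))

/-- Consecutive pairs `(uₙ, uₙ₊₁)` of the generalised eigenvector with initial data `α`. -/
def genPair (a a' b : ℕ → H →L[ℂ] H) (z : ℂ) (α : H2 H) : ℕ → H × H
  | 0 => (WithLp.equiv 2 (H × H)) α
  | n + 1 =>
      let p := genPair a a' b z α n
      (p.2, a' (n + 1) (z • p.2 - b (n + 1) p.2 - adjoint (a n) p.1))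

/-- The generalised eigenvector with initial data `(u₀, u₁)ᵗ = α`. -/
def genVec (a a' b : ℕ → H →L[ℂ] H) (z : ℂ) (α : H2 H) (n : ℕ) : H :=
  (genPair a a' b z α n).1

/-- Iterated logarithm `log^{(i)}`. -/
def iterLog : ℕ → ℝ → ℝ
  | 0, x => x
  | i + 1, x => Real.log (iterLog i x)

/-- `g_j(x) = ∏_{i=1}^j log^{(i)}(x)`. -/
def gfun (j : ℕ) (x : ℝ) : ℝ := ∏ i ∈ Finset.Icc 1 j, iterLog i x

omit [CompleteSpace H] in
lemma inner_pr (x y x' y' : H) : (inner ℂ (pr x y) (pr x' y') : ℂ) = inner ℂ x x' + inner ℂ y y' := by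
  simp [pr, WithLp.prod_inner_apply]

omit [CompleteSpace H] in
lemma blk_pr (A B C D : H →L[ℂ] H) (x y : H) :
    blk A B C D (pr x y) = pr (A x + B y) (C x + D y) := rfl

omit [CompleteSpace H] in
lemma norm_pr_sq (x y : H) : ‖pr x y‖ ^ 2 = ‖x‖ ^ 2 + ‖y‖ ^ 2 := by
  rw [pr, WithLp.prod_norm_sq_eq_of_L2]; rfl

lemma re_inner_sym {E : Type*} [NormedAddCommGroup E] [InnerProductSpace ℂ E] [CompleteSpace E]
    (X : E →L[ℂ] E) (v : E) : (inner ℂ (sym X v) v : ℂ).re = (inner ℂ (X v) v : ℂ).re := by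
  have hz : (inner ℂ (sym X v) v : ℂ)
      = (2 : ℂ)⁻¹ * (inner ℂ (X v) v + inner ℂ v (X v)) := by
    simp only [sym, ContinuousLinearMap.smul_apply, ContinuousLinearMap.add_apply,
      inner_smul_left, inner_add_left, adjoint_inner_left]
    simp [mul_add, Complex.conj_ofNat]
  have hre : (inner ℂ v (X v) : ℂ).re = (inner ℂ (X v) v : ℂ).re := by
    rw [← inner_conj_symm (X v) v, Complex.conj_re]
  rw [hz]
  simp [Complex.mul_re, hre]
  ring

lemma inner_re_le_opNorm {E : Type*} [NormedAddCommGroup E] [InnerProductSpace ℂ E]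
    (X : E →L[ℂ] E) (v : E) : (inner ℂ (X v) v : ℂ).re ≤ ‖X‖ * ‖v‖ ^ 2 := by
  have h1 : (inner ℂ (X v) v : ℂ).re ≤ ‖(inner ℂ (X v) v : ℂ)‖ :=
    Complex.re_le_norm _
  have h2 : ‖(inner ℂ (X v) v : ℂ)‖ ≤ ‖X v‖ * ‖v‖ := norm_inner_le_norm _ _
  have h3 : ‖X v‖ ≤ ‖X‖ * ‖v‖ := X.le_opNorm v
  have h4 : ‖X v‖ * ‖v‖ ≤ (‖X‖ * ‖v‖) * ‖v‖ := by
    exact mul_le_mul_of_nonneg_right h3 (norm_nonneg v)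
  calc (inner ℂ (X v) v : ℂ).re ≤ ‖X v‖ * ‖v‖ := h1.trans h2
    _ ≤ (‖X‖ * ‖v‖) * ‖v‖ := h4
    _ = ‖X‖ * ‖v‖ ^ 2 := by ring

lemma comm_eq_clim (a b a' al : ℕ → H →L[ℂ] H)
    (hinv : ∀ n, Inverts (a n) (a' n)) (hb : ∀ n, IsSelfAdjoint (b n))
    (lam : ℝ) (u : ℕ → H) (hu : GenEigRec a b (lam : ℂ) u) (n : ℕ) :
    commS a b al lam u (n + 1) =
      (inner ℂ (climOp a a' b al lam (n + 1) (pr (u (n + 1)) (u (n + 2))))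
        (pr (u (n + 1)) (u (n + 2))) : ℂ).re := by
  have hbadj : adjoint (b (n + 1)) = b (n + 1) := by
    rw [← ContinuousLinearMap.star_eq_adjoint]; exact hb (n + 1)
  set x := u n with hx
  set x1 := u (n + 1) with hx1
  set x2 := u (n + 2) with hx2
  set y := a' n ((al n) ((a (n + 1)) x2)) with hy
  have h1 : (al n) ((a (n + 1)) x2) = (a n) y := by
    rw [hy]
    have := congrArg (fun T : H →L[ℂ] H => T ((al n) ((a (n + 1)) x2))) (hinv n).2
    simpa using this.symm
  have hrec := hu n
  have hadj : adjoint (a n) x = (lam : ℂ) • x1 - b (n + 1) x1 - a (n + 1) x2 := by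
    rw [← hrec]; abel
  show (inner ℂ (commOp a b al lam (n + 1) (pr x x1)) (pr x x1) : ℂ).re = _
  unfold commOp climOp
  rw [re_inner_sym, re_inner_sym]
  congr 1
  simp only [Nat.add_sub_cancel, blk_pr, inner_pr, ContinuousLinearMap.comp_apply,
    ContinuousLinearMap.neg_apply, ContinuousLinearMap.zero_apply, zero_add,
    ContinuousLinearMap.sub_apply, ContinuousLinearMap.smul_apply,
    ContinuousLinearMap.one_apply, ContinuousLinearMap.coe_smul', Pi.smul_apply]
  have e1 : (inner ℂ ((a n) y) x : ℂ) = inner ℂ y (adjoint (a n) x) :=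
    (adjoint_inner_right (a n) y x).symm
  have e2 : (inner ℂ ((b (n + 1)) y) x1 : ℂ) = inner ℂ y ((b (n + 1)) x1) := by
    conv_lhs => rw [← hbadj]
    exact adjoint_inner_left _ _ _
  have e3 : (inner ℂ (adjoint (a (n + 1)) y) x2 : ℂ) = inner ℂ y ((a (n + 1)) x2) :=
    adjoint_inner_left _ _ _
  rw [← hy]
  have hfold : (al n) ((adjoint (a n)) x) + -(al n) ((lam : ℂ) • x1 - (b (n + 1)) x1)
      = -((al n) ((a (n + 1)) x2)) := by
    rw [← sub_eq_add_neg, ← map_sub, ← map_neg]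
    congr 1
    rw [hadj]; abel
  rw [hfold, h1]
  simp only [e1, e2, e3, hadj, inner_neg_left, inner_add_left, inner_sub_left, inner_sub_right,
    inner_smul_left, inner_smul_right, Complex.conj_ofReal]
  ring

/-- Corollary `cor:1`. -/
theorem statement14 (a b a' al : ℕ → H →L[ℂ] H)
    (hinv : ∀ n, Inverts (a n) (a' n)) (hb : ∀ n, IsSelfAdjoint (b n))
    (lam : ℝ)
    (hCl : ∃ Cl : H2 H →L[ℂ] H2 H,
      Tendsto (fun n => ‖(‖al n ∘L adjoint (a n)‖⁻¹ : ℝ) • climOp a a' b al lam n - Cl‖)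
        atTop (nhds 0) ∧ StrictlyPos Cl)
    (hdiv : ¬ Summable fun n : ℕ => 1 / ‖al n ∘L adjoint (a n)‖)
    (α : H2 H) (hα : α ≠ 0) (u : ℕ → H)
    (hu : GenEigRec a b (lam : ℂ) u) (hu0 : pr (u 0) (u 1) = α)
    (hliminf : ∃ ε > (0 : ℝ), ∀ᶠ n in atTop, ε ≤ commS a b al lam u n) :
    ¬ MemL2 u := by
  intro hL2
  have hL2' : Summable (fun n => ‖u n‖ ^ 2) := hL2
  obtain ⟨Cl, htend, c, hc, hpos⟩ := hCl
  rcases subsingleton_or_nontrivial H with hS | hN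
  · haveI : Subsingleton (H2 H) := (WithLp.equiv 2 (H × H)).subsingleton
    exact hα (Subsingleton.elim α 0)
  obtain ⟨x0, hx0⟩ := exists_ne (0 : H)
  have hv0 : (0 : ℝ) < ‖pr x0 (0 : H)‖ ^ 2 := by
    rw [norm_pr_sq]
    have h1 : 0 < ‖x0‖ := norm_pos_iff.mpr hx0
    simp only [norm_zero]
    nlinarith
  have hcCl : c ≤ ‖Cl‖ := by
    have h1 := hpos (pr x0 0)
    have h2 : (inner ℂ (Cl (pr x0 0)) (pr x0 0) : ℂ).re ≤ ‖Cl‖ * ‖pr x0 0‖ ^ 2 :=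
      inner_re_le_opNorm Cl (pr x0 0)
    nlinarith
  set ρ : ℕ → ℝ := fun n => ‖al n ∘L adjoint (a n)‖ with hρdef
  have hev1 : ∀ᶠ n in atTop, ‖(ρ n)⁻¹ • climOp a a' b al lam n - Cl‖ < c / 2 :=
    htend.eventually_lt_const (by linarith)
  obtain ⟨ε, hε, hev2⟩ := hliminf
  set K := ‖Cl‖ + c / 2 with hK
  have hKpos : 0 < K := by rw [hK]; linarith
  have hbound : ∀ᶠ n in atTop, 0 < ρ n ∧ ‖climOp a a' b al lam n‖ ≤ K * ρ n := by
    filter_upwards [hev1] with n hn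
    have hρpos : 0 < ρ n := by
      rcases eq_or_lt_of_le (norm_nonneg (al n ∘L adjoint (a n))) with h0 | h0
      · exfalso
        have hz : (ρ n)⁻¹ • climOp a a' b al lam n = 0 := by
          rw [show ρ n = 0 from h0.symm, inv_zero]
          exact zero_smul ℝ (climOp a a' b al lam n)
        rw [hz, zero_sub, norm_neg] at hn
        linarith
      · exact h0
    refine ⟨hρpos, ?_⟩
    have hs1 : ‖(ρ n)⁻¹ • climOp a a' b al lam n‖ ≤ K := by
      have h3 := norm_sub_norm_le ((ρ n)⁻¹ • climOp a a' b al lam n) Cl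
      linarith
    have hs2 : ‖(ρ n)⁻¹ • climOp a a' b al lam n‖
        = (ρ n)⁻¹ * ‖climOp a a' b al lam n‖ := by
      rw [norm_smul ((ρ n)⁻¹) (climOp a a' b al lam n), Real.norm_eq_abs,
        abs_of_nonneg (inv_nonneg.mpr hρpos.le)]
    rw [hs2] at hs1
    have := mul_le_mul_of_nonneg_left hs1 hρpos.le
    rw [← mul_assoc, mul_inv_cancel₀ hρpos.ne', one_mul] at this
    linarith [this]
  have hfinal : ∀ᶠ m in atTop,
      ε / ρ (m + 1) ≤ K * (‖u (m + 1)‖ ^ 2 + ‖u (m + 2)‖ ^ 2) := by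
    filter_upwards [(tendsto_add_atTop_nat 1).eventually hbound,
      (tendsto_add_atTop_nat 1).eventually hev2] with m hbm hsm
    obtain ⟨hρp, hcl⟩ := hbm
    have hid := comm_eq_clim a b a' al hinv hb lam u hu m
    set w := pr (u (m + 1)) (u (m + 2)) with hw
    have h4 : commS a b al lam u (m + 1) ≤ ‖climOp a a' b al lam (m + 1)‖ * ‖w‖ ^ 2 := by
      rw [hid]
      exact inner_re_le_opNorm (climOp a a' b al lam (m + 1)) w
    have hwsq : ‖w‖ ^ 2 = ‖u (m + 1)‖ ^ 2 + ‖u (m + 2)‖ ^ 2 := norm_pr_sq _ _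
    have hwn : (0 : ℝ) ≤ ‖w‖ ^ 2 := by positivity
    have h5 : ε ≤ K * ρ (m + 1) * (‖u (m + 1)‖ ^ 2 + ‖u (m + 2)‖ ^ 2) := by
      calc ε ≤ commS a b al lam u (m + 1) := hsm
        _ ≤ ‖climOp a a' b al lam (m + 1)‖ * ‖w‖ ^ 2 := h4
        _ ≤ K * ρ (m + 1) * ‖w‖ ^ 2 := mul_le_mul_of_nonneg_right hcl hwn
        _ = K * ρ (m + 1) * (‖u (m + 1)‖ ^ 2 + ‖u (m + 2)‖ ^ 2) := by rw [hwsq]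
    rw [div_le_iff₀ hρp]
    calc ε ≤ K * ρ (m + 1) * (‖u (m + 1)‖ ^ 2 + ‖u (m + 2)‖ ^ 2) := h5
      _ = K * (‖u (m + 1)‖ ^ 2 + ‖u (m + 2)‖ ^ 2) * ρ (m + 1) := by ring
  obtain ⟨N, hN⟩ := eventually_atTop.1 hfinal
  have hg : Summable (fun m => K * (‖u (m + 1)‖ ^ 2 + ‖u (m + 2)‖ ^ 2)) :=
    (((summable_nat_add_iff 1).2 hL2').add ((summable_nat_add_iff 2).2 hL2')).mul_left K
  have hf : Summable (fun m => ε / ρ (m + 1)) := by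
    rw [← summable_nat_add_iff N]
    refine Summable.of_nonneg_of_le (fun m => div_nonneg hε.le (norm_nonneg _)) ?_
      ((summable_nat_add_iff N).2 hg)
    intro m
    exact hN (m + N) (Nat.le_add_left _ _)
  have hf2 : Summable (fun m => ε / ρ m) := (summable_nat_add_iff 1).1 hf
  refine hdiv ?_
  have heq : (fun n : ℕ => 1 / ‖al n ∘L adjoint (a n)‖) = fun m => ε⁻¹ * (ε / ρ m) := by
    funext m
    simp only [hρdef]
    rw [one_div, eq_comm, div_eq_mul_inv, ← mul_assoc, inv_mul_cancel₀ hε.ne', one_mul]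
  rw [heq]
  exact hf2.mul_left _
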